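/- There is an absolute constant c ≥ 1 such that for all integers k ≥ 1, the sum over i = 1 to k-1 of (k/i)^{i/2}·(k/(k-i))^{(k-i)/2}·(i(k-i))^{-1/2} is at most c·√(2^k/k). -/

import Mathlib

open Finset

/-- For `0 < t ≤ 1`, `log t ≤ (t-1) - (t-1)^2/4`. -/
private lemma log_quad {t : ℝ} (ht : 0 < t) (ht1 : t ≤ 1) :
    Real.log t ≤ (t - 1) - (t - 1) ^ 2 / 4 := by
  have hs : Real.sqrt t ^ 2 = t := Real.sq_sqrt ht.le
  have hs1 : Real.sqrt t ≤ 1 := by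
    have : Real.sqrt t ≤ Real.sqrt 1 := Real.sqrt_le_sqrt ht1
    simpa using this
  have hs0 : 0 < Real.sqrt t := Real.sqrt_pos.2 ht
  have h1 : Real.log t = 2 * Real.log (Real.sqrt t) := by
    rw [Real.log_sqrt ht.le]; ring
  have h2 : Real.log (Real.sqrt t) ≤ Real.sqrt t - 1 :=
    Real.log_le_sub_one_of_pos hs0
  nlinarith [sq_nonneg (Real.sqrt t - 1),
    mul_nonneg (mul_nonneg (sq_nonneg (Real.sqrt t - 1)) (sub_nonneg.2 hs1))
      (by positivity : (0:ℝ) ≤ 3 + Real.sqrt t)]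

private lemma entropy_bound {x y : ℝ} (hx : 0 < x) (hxy : x ≤ y) :
    x / 2 * Real.log ((x + y) / x) + y / 2 * Real.log ((x + y) / y) ≤
      (x + y) / 2 * Real.log 2 - (y - x) ^ 2 / (32 * (x + y)) := by
  have hy : 0 < y := hx.trans_le hxy
  have hs : 0 < x + y := by linarith
  have h1 : Real.log ((x + y) / x) = Real.log 2 + Real.log ((x + y) / (2 * x)) := by
    rw [← Real.log_mul (by norm_num) (by positivity)]
    congr 1
    field_simp
  have h2 : Real.log ((x + y) / y) = Real.log 2 + Real.log ((x + y) / (2 * y)) := by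
    rw [← Real.log_mul (by norm_num) (by positivity)]
    congr 1
    field_simp
  have h3 : Real.log ((x + y) / (2 * x)) ≤ (x + y) / (2 * x) - 1 :=
    Real.log_le_sub_one_of_pos (by positivity)
  have h4 : Real.log ((x + y) / (2 * y)) ≤
      ((x + y) / (2 * y) - 1) - ((x + y) / (2 * y) - 1) ^ 2 / 4 :=
    log_quad (by positivity) (by rw [div_le_one (by positivity)]; linarith)
  have hA := mul_le_mul_of_nonneg_left h3 (by positivity : (0:ℝ) ≤ x / 2)
  have hB := mul_le_mul_of_nonneg_left h4 (by positivity : (0:ℝ) ≤ y / 2)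
  have e3 : x / 2 * ((x + y) / (2 * x) - 1) = (x + y) / 4 - x / 2 := by
    field_simp; ring
  have e4 : y / 2 * (((x + y) / (2 * y) - 1) - ((x + y) / (2 * y) - 1) ^ 2 / 4)
      = (x + y) / 4 - y / 2 - (x - y) ^ 2 / (32 * y) := by
    field_simp; ring
  rw [e3] at hA
  rw [e4] at hB
  have h5 : (y - x) ^ 2 / (32 * (x + y)) ≤ (x - y) ^ 2 / (32 * y) := by
    rw [show (y - x) ^ 2 = (x - y) ^ 2 by ring]
    exact div_le_div_of_nonneg_left (sq_nonneg _) (by positivity) (by linarith)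
  rw [h1, h2]
  have expand : x / 2 * (Real.log 2 + Real.log ((x + y) / (2 * x)))
      + y / 2 * (Real.log 2 + Real.log ((x + y) / (2 * y)))
      = (x + y) / 2 * Real.log 2 + x / 2 * Real.log ((x + y) / (2 * x))
        + y / 2 * Real.log ((x + y) / (2 * y)) := by ring
  rw [expand]
  linarith

private lemma term_bound_aux {x y : ℝ} (hx : 0 < x) (hy : 0 < y) (hxy : x ≤ y) :
    ((x + y) / x) ^ (x / 2) * ((x + y) / y) ^ (y / 2) ≤
      (2:ℝ) ^ ((x + y) / 2) * Real.exp (-((y - x) ^ 2 / (32 * (x + y)))) := by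
  have hs : 0 < x + y := by linarith
  rw [Real.rpow_def_of_pos (by positivity), Real.rpow_def_of_pos (by positivity),
    Real.rpow_def_of_pos (by norm_num : (0:ℝ) < 2), ← Real.exp_add, ← Real.exp_add]
  apply Real.exp_le_exp.2
  have := entropy_bound hx hxy
  nlinarith [this]

private lemma term_bound {x y : ℝ} (hx : 0 < x) (hy : 0 < y) :
    ((x + y) / x) ^ (x / 2) * ((x + y) / y) ^ (y / 2) ≤
      (2:ℝ) ^ ((x + y) / 2) * Real.exp (-((y - x) ^ 2 / (32 * (x + y)))) := by
  rcases le_total x y with h | h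
  · exact term_bound_aux hx hy h
  · have := term_bound_aux hy hx h
    rw [add_comm y x] at this
    calc ((x + y) / x) ^ (x / 2) * ((x + y) / y) ^ (y / 2)
        = ((x + y) / y) ^ (y / 2) * ((x + y) / x) ^ (x / 2) := mul_comm _ _
      _ ≤ (2:ℝ) ^ ((x + y) / 2) * Real.exp (-((x - y) ^ 2 / (32 * (x + y)))) := this
      _ = (2:ℝ) ^ ((x + y) / 2) * Real.exp (-((y - x) ^ 2 / (32 * (x + y)))) := by
          rw [show (x - y) ^ 2 = (y - x) ^ 2 by ring]

private lemma quad_aux {s : ℝ} (hs : 0 < s) (u : ℝ) :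
    u * (1 / (32 * s)) - 1 / 128 ≤ u ^ 2 / (32 * s ^ 2) := by
  have key : u ^ 2 / (32 * s ^ 2) - (u * (1 / (32 * s)) - 1 / 128)
      = (u - s / 2) ^ 2 / (32 * s ^ 2) := by
    field_simp
    ring
  have hnn : 0 ≤ (u - s / 2) ^ 2 / (32 * s ^ 2) := by positivity
  linarith [key ▸ hnn]

private lemma range_gauss {k : ℕ} (hk : 1 ≤ k) :
    ∑ j ∈ Finset.range (k + 1), Real.exp (-((j:ℝ) ^ 2 / (32 * (k:ℝ)))) ≤
      192 * Real.sqrt k := by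
  have hK : (0:ℝ) < (k:ℝ) := by exact_mod_cast hk
  have hsK : (0:ℝ) < Real.sqrt k := Real.sqrt_pos.2 hK
  have h1sK : (1:ℝ) ≤ Real.sqrt k := by
    have : Real.sqrt 1 ≤ Real.sqrt k := Real.sqrt_le_sqrt (by exact_mod_cast hk)
    simpa using this
  set c : ℝ := 1 / (32 * Real.sqrt k) with hc
  have hc0 : 0 < c := by positivity
  have hc1 : c ≤ 1 := by
    rw [hc, div_le_one (by positivity)]
    linarith
  have hterm : ∀ j : ℕ, Real.exp (-((j:ℝ) ^ 2 / (32 * (k:ℝ)))) ≤ 3 * Real.exp (-c) ^ j := by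
    intro j
    have h1 : (j:ℝ) * c - 1 / 128 ≤ (j:ℝ) ^ 2 / (32 * (k:ℝ)) := by
      have h := quad_aux hsK (j:ℝ)
      rw [Real.sq_sqrt hK.le] at h
      rw [hc]
      linarith
    calc Real.exp (-((j:ℝ) ^ 2 / (32 * (k:ℝ))))
        ≤ Real.exp (1 / 128 + (j:ℝ) * (-c)) := by
          apply Real.exp_le_exp.2
          nlinarith
      _ = Real.exp (1 / 128) * Real.exp (-c) ^ j := by
          rw [Real.exp_add, ← Real.exp_nat_mul]
      _ ≤ 3 * Real.exp (-c) ^ j := by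
          have h3 : Real.exp (1 / 128) ≤ 3 := by
            have := Real.exp_one_lt_d9
            have h' : Real.exp (1 / 128 : ℝ) ≤ Real.exp 1 := Real.exp_le_exp.2 (by norm_num)
            linarith
          exact mul_le_mul_of_nonneg_right h3 (pow_nonneg (Real.exp_pos _).le j)
  have hr1 : Real.exp (-c) < 1 := Real.exp_lt_one_iff.2 (by linarith)
  have hr0 : 0 < Real.exp (-c) := Real.exp_pos _
  have hgeom : ∑ j ∈ Finset.range (k + 1), Real.exp (-c) ^ j ≤ 1 / (1 - Real.exp (-c)) := by
    rw [geom_sum_eq (ne_of_lt hr1)]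
    rw [show (Real.exp (-c) ^ (k + 1) - 1) / (Real.exp (-c) - 1)
        = (1 - Real.exp (-c) ^ (k + 1)) / (1 - Real.exp (-c)) by
      rw [← neg_div_neg_eq]; ring_nf]
    apply div_le_div_of_nonneg_right ?_ (by linarith)
    nlinarith [pow_nonneg hr0.le (k + 1)]
  have hlow : c / 2 ≤ 1 - Real.exp (-c) := by
    have h2 := Real.add_one_le_exp c
    have h4 : Real.exp (-c) ≤ 1 / (1 + c) := by
      rw [Real.exp_neg, ← one_div]
      apply one_div_le_one_div_of_le (by linarith)
      linarith
    have h6 : c / (1 + c) = 1 - 1 / (1 + c) := by field_simp; ring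
    have h5 : c / 2 ≤ c / (1 + c) :=
      div_le_div_of_nonneg_left hc0.le (by linarith) (by linarith)
    linarith
  have hinv : 1 / (1 - Real.exp (-c)) ≤ 64 * Real.sqrt k := by
    have hpos : 0 < 1 - Real.exp (-c) := by linarith [hlow, hc0]
    have : 1 / (1 - Real.exp (-c)) ≤ 1 / (c / 2) :=
      one_div_le_one_div_of_le (by positivity) hlow
    have hcc : 1 / (c / 2) = 64 * Real.sqrt k := by
      rw [hc]
      field_simp
      ring
    linarith
  calc ∑ j ∈ Finset.range (k + 1), Real.exp (-((j:ℝ) ^ 2 / (32 * (k:ℝ))))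
      ≤ ∑ j ∈ Finset.range (k + 1), 3 * Real.exp (-c) ^ j :=
        Finset.sum_le_sum fun j _ => hterm j
    _ = 3 * ∑ j ∈ Finset.range (k + 1), Real.exp (-c) ^ j := by rw [Finset.mul_sum]
    _ ≤ 3 * (1 / (1 - Real.exp (-c))) := by
        apply mul_le_mul_of_nonneg_left hgeom (by norm_num)
    _ ≤ 3 * (64 * Real.sqrt k) := by
        apply mul_le_mul_of_nonneg_left hinv (by norm_num)
    _ = 192 * Real.sqrt k := by ring

private lemma gauss_sum {k : ℕ} (hk : 1 ≤ k) :
    ∑ i ∈ Finset.Ico 1 k, Real.exp (-(((k:ℝ) - 2 * i) ^ 2 / (32 * (k:ℝ)))) ≤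
      384 * Real.sqrt k := by
  classical
  rw [← Finset.sum_filter_add_sum_filter_not (Finset.Ico 1 k) (fun i => 2 * i ≤ k)]
  have half1 : ∑ i ∈ (Finset.Ico 1 k).filter (fun i => 2 * i ≤ k),
      Real.exp (-(((k:ℝ) - 2 * i) ^ 2 / (32 * (k:ℝ)))) ≤ 192 * Real.sqrt k := by
    have hcongr : ∀ i ∈ (Finset.Ico 1 k).filter (fun i => 2 * i ≤ k),
        Real.exp (-(((k:ℝ) - 2 * i) ^ 2 / (32 * (k:ℝ))))
          = Real.exp (-((((k - 2 * i : ℕ)):ℝ) ^ 2 / (32 * (k:ℝ)))) := by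
      intro i hi
      obtain ⟨_, hi2⟩ := Finset.mem_filter.1 hi
      rw [Nat.cast_sub hi2]
      push_cast
      ring_nf
    rw [Finset.sum_congr rfl hcongr]
    have hinj : ∀ a ∈ (Finset.Ico 1 k).filter (fun i => 2 * i ≤ k),
        ∀ b ∈ (Finset.Ico 1 k).filter (fun i => 2 * i ≤ k),
        k - 2 * a = k - 2 * b → a = b := by
      intro a ha b hb hab
      obtain ⟨_, ha2⟩ := Finset.mem_filter.1 ha
      obtain ⟨_, hb2⟩ := Finset.mem_filter.1 hb
      omega
    calc ∑ i ∈ (Finset.Ico 1 k).filter (fun i => 2 * i ≤ k),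
          Real.exp (-((((k - 2 * i : ℕ)):ℝ) ^ 2 / (32 * (k:ℝ))))
        = ∑ j ∈ ((Finset.Ico 1 k).filter (fun i => 2 * i ≤ k)).image (fun i => k - 2 * i),
            Real.exp (-(((j:ℕ):ℝ) ^ 2 / (32 * (k:ℝ)))) := by
          rw [Finset.sum_image hinj]
      _ ≤ ∑ j ∈ Finset.range (k + 1), Real.exp (-(((j:ℕ):ℝ) ^ 2 / (32 * (k:ℝ)))) := by
          apply Finset.sum_le_sum_of_subset_of_nonneg
          · intro j hj
            simp only [Finset.mem_image, Finset.mem_filter, Finset.mem_Ico] at hj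
            obtain ⟨i, ⟨⟨_, _⟩, _⟩, rfl⟩ := hj
            simp only [Finset.mem_range]
            omega
          · intro j _ _
            exact (Real.exp_pos _).le
      _ ≤ 192 * Real.sqrt k := range_gauss hk
  have half2 : ∑ i ∈ (Finset.Ico 1 k).filter (fun i => ¬ 2 * i ≤ k),
      Real.exp (-(((k:ℝ) - 2 * i) ^ 2 / (32 * (k:ℝ)))) ≤ 192 * Real.sqrt k := by
    have hcongr : ∀ i ∈ (Finset.Ico 1 k).filter (fun i => ¬ 2 * i ≤ k),
        Real.exp (-(((k:ℝ) - 2 * i) ^ 2 / (32 * (k:ℝ))))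
          = Real.exp (-((((2 * i - k : ℕ)):ℝ) ^ 2 / (32 * (k:ℝ)))) := by
      intro i hi
      obtain ⟨_, hi2⟩ := Finset.mem_filter.1 hi
      rw [Nat.cast_sub (by omega)]
      push_cast
      ring_nf
    rw [Finset.sum_congr rfl hcongr]
    have hinj : ∀ a ∈ (Finset.Ico 1 k).filter (fun i => ¬ 2 * i ≤ k),
        ∀ b ∈ (Finset.Ico 1 k).filter (fun i => ¬ 2 * i ≤ k),
        2 * a - k = 2 * b - k → a = b := by
      intro a ha b hb hab
      obtain ⟨_, ha2⟩ := Finset.mem_filter.1 ha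
      obtain ⟨_, hb2⟩ := Finset.mem_filter.1 hb
      omega
    calc ∑ i ∈ (Finset.Ico 1 k).filter (fun i => ¬ 2 * i ≤ k),
          Real.exp (-((((2 * i - k : ℕ)):ℝ) ^ 2 / (32 * (k:ℝ))))
        = ∑ j ∈ ((Finset.Ico 1 k).filter (fun i => ¬ 2 * i ≤ k)).image (fun i => 2 * i - k),
            Real.exp (-(((j:ℕ):ℝ) ^ 2 / (32 * (k:ℝ)))) := by
          rw [Finset.sum_image hinj]
      _ ≤ ∑ j ∈ Finset.range (k + 1), Real.exp (-(((j:ℕ):ℝ) ^ 2 / (32 * (k:ℝ)))) := by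
          apply Finset.sum_le_sum_of_subset_of_nonneg
          · intro j hj
            simp only [Finset.mem_image, Finset.mem_filter, Finset.mem_Ico] at hj
            obtain ⟨i, ⟨⟨_, hik⟩, _⟩, rfl⟩ := hj
            simp only [Finset.mem_range]
            omega
          · intro j _ _
            exact (Real.exp_pos _).le
      _ ≤ 192 * Real.sqrt k := range_gauss hk
  linarith

theorem sqrt_double_binomial_sum :
    ∃ c : ℝ, 1 ≤ c ∧ ∀ k : ℕ, 1 ≤ k →
      ∑ i ∈ Finset.Ico 1 k,
          ((k : ℝ) / i) ^ ((i : ℝ) / 2) * ((k : ℝ) / ((k : ℝ) - i)) ^ (((k : ℝ) - i) / 2) /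
            Real.sqrt ((i : ℝ) * ((k : ℝ) - i)) ≤
        c * Real.sqrt (2 ^ k / (k : ℝ)) := by
  refine ⟨100000, by norm_num, fun k hk => ?_⟩
  have hK : (0:ℝ) < (k:ℝ) := by exact_mod_cast hk
  have h1K : (1:ℝ) ≤ (k:ℝ) := by exact_mod_cast hk
  have hsK : (0:ℝ) < Real.sqrt k := Real.sqrt_pos.2 hK
  have hkk : Real.sqrt k * Real.sqrt k = (k:ℝ) := Real.mul_self_sqrt hK.le
  have h1sK : (1:ℝ) ≤ Real.sqrt k := by
    have : Real.sqrt 1 ≤ Real.sqrt k := Real.sqrt_le_sqrt h1K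
    simpa using this
  have step1 : ∀ i ∈ Finset.Ico 1 k,
      ((k : ℝ) / i) ^ ((i : ℝ) / 2) * ((k : ℝ) / ((k : ℝ) - i)) ^ (((k : ℝ) - i) / 2) /
          Real.sqrt ((i : ℝ) * ((k : ℝ) - i)) ≤
        (2:ℝ) ^ ((k:ℝ) / 2) * Real.exp (-(((k:ℝ) - 2 * i) ^ 2 / (32 * (k:ℝ)))) /
          Real.sqrt ((i : ℝ) * ((k : ℝ) - i)) := by
    intro i hi
    obtain ⟨hi1, hi2⟩ := Finset.mem_Ico.1 hi
    have hx : (0:ℝ) < i := by exact_mod_cast hi1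
    have hy : (0:ℝ) < (k:ℝ) - i := by
      have : (i:ℝ) + 1 ≤ k := by exact_mod_cast hi2
      linarith
    have hb := term_bound hx hy
    rw [show (i:ℝ) + ((k:ℝ) - i) = (k:ℝ) by ring] at hb
    rw [show (k:ℝ) - (i:ℝ) - (i:ℝ) = (k:ℝ) - 2 * i by ring] at hb
    exact div_le_div_of_nonneg_right hb (Real.sqrt_nonneg _)
  have step2 : ∀ i ∈ Finset.Ico 1 k,
      (2:ℝ) ^ ((k:ℝ) / 2) * Real.exp (-(((k:ℝ) - 2 * i) ^ 2 / (32 * (k:ℝ)))) /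
          Real.sqrt ((i : ℝ) * ((k : ℝ) - i)) ≤
        (2:ℝ) ^ ((k:ℝ) / 2) *
          (4 / (k:ℝ) * Real.exp (-(((k:ℝ) - 2 * i) ^ 2 / (32 * (k:ℝ))))
            + Real.exp (-((k:ℝ) / 128))) := by
    intro i hi
    obtain ⟨hi1, hi2⟩ := Finset.mem_Ico.1 hi
    have hx1 : (1:ℝ) ≤ i := by exact_mod_cast hi1
    have hy1 : (1:ℝ) ≤ (k:ℝ) - i := by
      have : (i:ℝ) + 1 ≤ k := by exact_mod_cast hi2
      linarith
    have hprod1 : (1:ℝ) ≤ (i:ℝ) * ((k:ℝ) - i) := by nlinarith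
    have hR1 : (1:ℝ) ≤ Real.sqrt ((i:ℝ) * ((k:ℝ) - i)) := by
      have : Real.sqrt 1 ≤ Real.sqrt ((i:ℝ) * ((k:ℝ) - i)) := Real.sqrt_le_sqrt hprod1
      simpa using this
    have hRpos : (0:ℝ) < Real.sqrt ((i:ℝ) * ((k:ℝ) - i)) := by linarith
    rw [mul_div_assoc]
    apply mul_le_mul_of_nonneg_left ?_ (by positivity)
    by_cases hmid : k ≤ 4 * i ∧ k ≤ 4 * (k - i)
    · obtain ⟨hm1, hm2⟩ := hmid
      have hm1' : (k:ℝ) ≤ 4 * i := by exact_mod_cast hm1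
      have hm2' : (k:ℝ) ≤ 4 * ((k:ℝ) - i) := by
        have h' : (k:ℝ) ≤ 4 * ((k - i : ℕ):ℝ) := by exact_mod_cast hm2
        rwa [Nat.cast_sub hi2.le] at h' <;> push_cast at h' ⊢ <;> linarith
      have hR : (k:ℝ) / 4 ≤ Real.sqrt ((i:ℝ) * ((k:ℝ) - i)) := by
        rw [show (k:ℝ) / 4 = Real.sqrt (((k:ℝ) / 4) ^ 2) from (Real.sqrt_sq (by positivity)).symm]
        apply Real.sqrt_le_sqrt
        nlinarith
      have hmain : Real.exp (-(((k:ℝ) - 2 * i) ^ 2 / (32 * (k:ℝ)))) /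
          Real.sqrt ((i:ℝ) * ((k:ℝ) - i)) ≤
          4 / (k:ℝ) * Real.exp (-(((k:ℝ) - 2 * i) ^ 2 / (32 * (k:ℝ)))) := by
        calc Real.exp (-(((k:ℝ) - 2 * i) ^ 2 / (32 * (k:ℝ)))) /
              Real.sqrt ((i:ℝ) * ((k:ℝ) - i))
            ≤ Real.exp (-(((k:ℝ) - 2 * i) ^ 2 / (32 * (k:ℝ)))) / ((k:ℝ) / 4) :=
              div_le_div_of_nonneg_left (Real.exp_pos _).le (by positivity) hR
          _ = 4 / (k:ℝ) * Real.exp (-(((k:ℝ) - 2 * i) ^ 2 / (32 * (k:ℝ)))) := by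
              field_simp
      linarith [Real.exp_pos (-((k:ℝ) / 128))]
    · have hout : (k:ℝ) ^ 2 / 4 ≤ ((k:ℝ) - 2 * i) ^ 2 := by
        rcases Nat.lt_or_ge (4 * i) k with hlt | hge
        · have h' : (4 * i : ℝ) + 1 ≤ k := by exact_mod_cast hlt
          push_cast at h'
          nlinarith
        · have h3 : 4 * (k - i) < k := by
            rcases not_and_or.1 hmid with h | h
            · omega
            · omega
          have h4 : 4 * ((k:ℝ) - i) + 1 ≤ k := by
            have h5 : (4 * (k - i) : ℕ) + 1 ≤ k := by omega
            have h6 : ((4 * (k - i) : ℕ) : ℝ) + 1 ≤ k := by exact_mod_cast h5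
            rw [Nat.cast_mul, Nat.cast_sub hi2.le] at h6
            push_cast at h6 ⊢
            linarith
          nlinarith
      have hEe : Real.exp (-(((k:ℝ) - 2 * i) ^ 2 / (32 * (k:ℝ)))) ≤
          Real.exp (-((k:ℝ) / 128)) := by
        apply Real.exp_le_exp.2
        have : (k:ℝ) / 128 ≤ ((k:ℝ) - 2 * i) ^ 2 / (32 * (k:ℝ)) := by
          rw [div_le_div_iff₀ (by norm_num) (by positivity)]
          nlinarith
        linarith
      have hdiv : Real.exp (-(((k:ℝ) - 2 * i) ^ 2 / (32 * (k:ℝ)))) /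
          Real.sqrt ((i:ℝ) * ((k:ℝ) - i)) ≤
          Real.exp (-(((k:ℝ) - 2 * i) ^ 2 / (32 * (k:ℝ)))) :=
        div_le_self (Real.exp_pos _).le hR1
      have hnn : 0 ≤ 4 / (k:ℝ) * Real.exp (-(((k:ℝ) - 2 * i) ^ 2 / (32 * (k:ℝ)))) := by
        positivity
      linarith
  have hBexp : (k:ℝ) * Real.exp (-((k:ℝ) / 128)) ≤ 65536 / (k:ℝ) := by
    have hdouble : Real.exp ((k:ℝ) / 128) = Real.exp ((k:ℝ) / 256) * Real.exp ((k:ℝ) / 256) := by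
      rw [← Real.exp_add]
      ring_nf
    have h1 := Real.add_one_le_exp ((k:ℝ) / 256)
    have hexppos : (0:ℝ) < Real.exp ((k:ℝ) / 256) := Real.exp_pos _
    have hA : (k:ℝ) ^ 2 / 65536 ≤ Real.exp ((k:ℝ) / 128) := by
      rw [hdouble]
      nlinarith
    rw [Real.exp_neg]
    rw [← one_div, mul_one_div, div_le_div_iff₀ (Real.exp_pos _) hK]
    nlinarith [Real.exp_pos ((k:ℝ) / 128)]
  have hsqrt : Real.sqrt ((2:ℝ) ^ k / (k:ℝ)) = (2:ℝ) ^ ((k:ℝ) / 2) / Real.sqrt k := by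
    rw [Real.sqrt_div (by positivity) _]
    congr 1
    rw [← Real.rpow_natCast 2 k, Real.sqrt_eq_rpow, ← Real.rpow_mul (by norm_num)]
    congr 1
    ring
  have hgauss := gauss_sum hk
  calc ∑ i ∈ Finset.Ico 1 k,
        ((k : ℝ) / i) ^ ((i : ℝ) / 2) * ((k : ℝ) / ((k : ℝ) - i)) ^ (((k : ℝ) - i) / 2) /
          Real.sqrt ((i : ℝ) * ((k : ℝ) - i))
      ≤ ∑ i ∈ Finset.Ico 1 k,
          (2:ℝ) ^ ((k:ℝ) / 2) * Real.exp (-(((k:ℝ) - 2 * i) ^ 2 / (32 * (k:ℝ)))) /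
            Real.sqrt ((i : ℝ) * ((k : ℝ) - i)) := Finset.sum_le_sum step1
    _ ≤ ∑ i ∈ Finset.Ico 1 k,
          (2:ℝ) ^ ((k:ℝ) / 2) *
            (4 / (k:ℝ) * Real.exp (-(((k:ℝ) - 2 * i) ^ 2 / (32 * (k:ℝ))))
              + Real.exp (-((k:ℝ) / 128))) := Finset.sum_le_sum step2
    _ = (2:ℝ) ^ ((k:ℝ) / 2) *
          (4 / (k:ℝ) * ∑ i ∈ Finset.Ico 1 k, Real.exp (-(((k:ℝ) - 2 * i) ^ 2 / (32 * (k:ℝ))))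
            + ((k - 1 : ℕ) : ℝ) * Real.exp (-((k:ℝ) / 128))) := by
        rw [← Finset.mul_sum, Finset.sum_add_distrib, ← Finset.mul_sum, Finset.sum_const,
          Nat.card_Ico, nsmul_eq_mul]
    _ ≤ (2:ℝ) ^ ((k:ℝ) / 2) *
          (4 / (k:ℝ) * (384 * Real.sqrt k) + (k:ℝ) * Real.exp (-((k:ℝ) / 128))) := by
        apply mul_le_mul_of_nonneg_left ?_ (by positivity)
        have hcard : ((k - 1 : ℕ) : ℝ) ≤ (k:ℝ) := by
          exact_mod_cast Nat.sub_le k 1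
        have h1 : 4 / (k:ℝ) *
            ∑ i ∈ Finset.Ico 1 k, Real.exp (-(((k:ℝ) - 2 * i) ^ 2 / (32 * (k:ℝ))))
            ≤ 4 / (k:ℝ) * (384 * Real.sqrt k) :=
          mul_le_mul_of_nonneg_left hgauss (by positivity)
        have h2 : ((k - 1 : ℕ) : ℝ) * Real.exp (-((k:ℝ) / 128)) ≤
            (k:ℝ) * Real.exp (-((k:ℝ) / 128)) :=
          mul_le_mul_of_nonneg_right hcard (Real.exp_pos _).le
        linarith
    _ ≤ (2:ℝ) ^ ((k:ℝ) / 2) * (100000 / Real.sqrt k) := by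
        apply mul_le_mul_of_nonneg_left ?_ (by positivity)
        have hA : 4 / (k:ℝ) * (384 * Real.sqrt k) = 1536 / Real.sqrt k := by
          field_simp
          linear_combination (1536:ℝ) * hkk
        have hBC : 65536 / (k:ℝ) ≤ 65536 / Real.sqrt k := by
          apply div_le_div_of_nonneg_left (by norm_num) hsK
          nlinarith
        have hfin : (1536:ℝ) / Real.sqrt k + 65536 / Real.sqrt k ≤ 100000 / Real.sqrt k := by
          rw [← add_div]
          apply div_le_div_of_nonneg_right (by norm_num) (Real.sqrt_nonneg _)
        linarith
    _ = 100000 * Real.sqrt (2 ^ k / (k:ℝ)) := by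
        rw [hsqrt]
        ring
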